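/- arXiv:2307.15708 — 3 statements merged into one kernel-verified Lean document; each statement's English description precedes it below -/
import Mathlib

section
/- Let ρ be a d×d density matrix and {M_i} a family of orthogonal projections with M_i M_j = δ_{ij} M_i and Σ_i M_i = 𝟙. Then S(Σ_i M_i ρ M_i) ≥ S(ρ), where S is the von Neumann entropy. -/
open Matrix
open scoped ComplexOrder

/-- The von Neumann entropy of a Hermitian matrix, −tr(ρ log ρ), computed via eigenvalues. -/
noncomputable def vonNeumannEntropy {d : ℕ} (ρ : Matrix (Fin d) (Fin d) ℂ)
    (h : ρ.IsHermitian) : ℝ :=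
  -∑ i, h.eigenvalues i * Real.log (h.eigenvalues i)

theorem stmt_10 {d : ℕ} {ι : Type} [Fintype ι] [DecidableEq ι]
    (ρ : Matrix (Fin d) (Fin d) ℂ) (hρ : ρ.PosSemidef) (htr : ρ.trace = 1)
    (M : ι → Matrix (Fin d) (Fin d) ℂ)
    (hherm : ∀ i, (M i).IsHermitian)
    (hproj : ∀ i j, M i * M j = if i = j then M i else 0)
    (hsum : ∑ i, M i = 1)
    (hpinch : (∑ i, M i * ρ * M i).IsHermitian) :
    vonNeumannEntropy ρ hρ.1 ≤ vonNeumannEntropy (∑ i, M i * ρ * M i) hpinch := by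
  classical
  set U : Matrix (Fin d) (Fin d) ℂ := (hρ.1.eigenvectorUnitary : Matrix (Fin d) (Fin d) ℂ) with hU
  set W : Matrix (Fin d) (Fin d) ℂ := (hpinch.eigenvectorUnitary : Matrix (Fin d) (Fin d) ℂ) with hW
  set p : Fin d → ℝ := hρ.1.eigenvalues with hp
  set q : Fin d → ℝ := hpinch.eigenvalues with hq
  have hU1 : U * star U = 1 := Matrix.mem_unitaryGroup_iff.mp hρ.1.eigenvectorUnitary.prop
  have hU2 : star U * U = 1 := Matrix.mem_unitaryGroup_iff'.mp hρ.1.eigenvectorUnitary.prop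
  have hW1 : W * star W = 1 := Matrix.mem_unitaryGroup_iff.mp hpinch.eigenvectorUnitary.prop
  have hW2 : star W * W = 1 := Matrix.mem_unitaryGroup_iff'.mp hpinch.eigenvectorUnitary.prop
  set A : ι → Matrix (Fin d) (Fin d) ℂ := fun i => star W * M i * U with hA
  have hAstar : ∀ i, star (A i) = star U * M i * W := by
    intro i
    rw [hA]
    simp only [StarMul.star_mul, star_star, mul_assoc]
    rw [Matrix.star_eq_conjTranspose (M i), (hherm i).eq]
  have hMM : ∀ i, M i * M i = M i := by intro i; simpa using hproj i i
  set B : Fin d → Fin d → ℝ := fun j k => ∑ i, Complex.normSq (A i j k) with hB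
  -- row sums
  have hAAs : ∑ i, A i * star (A i) = 1 := by
    have : ∀ i, A i * star (A i) = star W * M i * W := by
      intro i
      rw [hAstar i, hA]
      calc star W * M i * U * (star U * M i * W)
          = star W * M i * (U * star U) * M i * W := by noncomm_ring
        _ = star W * (M i * M i) * W := by rw [hU1]; noncomm_ring
        _ = star W * M i * W := by rw [hMM i]
    rw [Finset.sum_congr rfl (fun i _ => this i)]
    calc ∑ i, star W * M i * W = star W * (∑ i, M i) * W := by
          rw [Finset.mul_sum, Finset.sum_mul]
      _ = 1 := by rw [hsum, mul_one, hW2]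
  have hsAA : ∑ i, star (A i) * A i = 1 := by
    have : ∀ i, star (A i) * A i = star U * M i * U := by
      intro i
      rw [hAstar i, hA]
      calc star U * M i * W * (star W * M i * U)
          = star U * M i * (W * star W) * M i * U := by noncomm_ring
        _ = star U * (M i * M i) * U := by rw [hW1]; noncomm_ring
        _ = star U * M i * U := by rw [hMM i]
    rw [Finset.sum_congr rfl (fun i _ => this i)]
    calc ∑ i, star U * M i * U = star U * (∑ i, M i) * U := by
          rw [Finset.mul_sum, Finset.sum_mul]
      _ = 1 := by rw [hsum, mul_one, hU2]
  have hBnn : ∀ j k, 0 ≤ B j k := by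
    intro j k
    exact Finset.sum_nonneg fun i _ => Complex.normSq_nonneg _
  have hpnn : ∀ k, 0 ≤ p k := fun k => hρ.eigenvalues_nonneg k
  have hBrow : ∀ j, ∑ k, B j k = 1 := by
    intro j
    have h1 : (∑ i, A i * star (A i)) j j = 1 := by rw [hAAs]; simp [Matrix.one_apply]
    have h2 : (∑ i, A i * star (A i)) j j = ∑ i, ∑ k, (Complex.normSq (A i j k) : ℂ) := by
      simp only [Matrix.sum_apply, Matrix.mul_apply, Matrix.star_apply, RCLike.star_def,
        Complex.mul_conj]
    have h3 : ((∑ k, B j k : ℝ) : ℂ) = 1 := by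
      push_cast [hB]
      rw [Finset.sum_comm, ← h2, h1]
    exact_mod_cast h3
  have hBcol : ∀ k, ∑ j, B j k = 1 := by
    intro k
    have h1 : (∑ i, star (A i) * A i) k k = 1 := by rw [hsAA]; simp [Matrix.one_apply]
    have h2 : (∑ i, star (A i) * A i) k k = ∑ i, ∑ j, (Complex.normSq (A i j k) : ℂ) := by
      simp only [Matrix.sum_apply, Matrix.mul_apply, Matrix.star_apply, RCLike.star_def]
      refine Finset.sum_congr rfl fun i _ => Finset.sum_congr rfl fun j _ => ?_
      rw [mul_comm, Complex.mul_conj]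
    have h3 : ((∑ j, B j k : ℝ) : ℂ) = 1 := by
      push_cast [hB]
      rw [Finset.sum_comm, ← h2, h1]
    exact_mod_cast h3
  have hterm : ∀ i, star W * (M i * ρ * M i) * W
      = A i * diagonal (RCLike.ofReal ∘ p) * star (A i) := by
    intro i
    rw [hAstar i, hA]
    conv_lhs => rw [hρ.1.spectral_theorem, Unitary.conjStarAlgAut_apply]
    rw [← hU, ← hp]
    noncomm_ring
  have hdiag : (diagonal (RCLike.ofReal ∘ q) : Matrix (Fin d) (Fin d) ℂ)
      = ∑ i, A i * diagonal (RCLike.ofReal ∘ p) * star (A i) := by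
    rw [← hpinch.conjStarAlgAut_star_eigenvectorUnitary, Unitary.conjStarAlgAut_apply, Unitary.coe_star,
      star_star, Finset.mul_sum, Finset.sum_mul]
    exact Finset.sum_congr rfl fun i _ => hterm i
  have hqB : ∀ j, q j = ∑ k, B j k * p k := by
    intro j
    have h0 : (diagonal (RCLike.ofReal ∘ q) : Matrix (Fin d) (Fin d) ℂ) j j
        = (∑ i, A i * diagonal (RCLike.ofReal ∘ p) * star (A i) :
            Matrix (Fin d) (Fin d) ℂ) j j := by rw [hdiag]
    have h2 : (∑ i, A i * diagonal (RCLike.ofReal ∘ p) * star (A i) :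
            Matrix (Fin d) (Fin d) ℂ) j j
        = ∑ i, ∑ k, (Complex.normSq (A i j k) : ℂ) * (p k : ℂ) := by
      simp only [Matrix.sum_apply]
      refine Finset.sum_congr rfl fun i _ => ?_
      rw [Matrix.mul_apply]
      refine Finset.sum_congr rfl fun k _ => ?_
      rw [Matrix.mul_diagonal, Matrix.star_apply, RCLike.star_def]
      simp only [Function.comp_apply]
      rw [mul_right_comm, Complex.mul_conj]
      rw [show ((p k : ℝ) : ℂ) = RCLike.ofReal (p k) from rfl]
    rw [h2] at h0
    have h1 : (diagonal (RCLike.ofReal ∘ q) : Matrix (Fin d) (Fin d) ℂ) j j = (q j : ℂ) := by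
      simp [Matrix.diagonal_apply_eq]
    rw [h1, Finset.sum_comm] at h0
    have h3 : (q j : ℂ) = ((∑ k, B j k * p k : ℝ) : ℂ) := by
      rw [h0]
      push_cast [hB]
      refine Finset.sum_congr rfl fun k _ => ?_
      rw [Finset.sum_mul]
    exact_mod_cast h3
  have jensen : ∀ j, q j * Real.log (q j) ≤ ∑ k, B j k * (p k * Real.log (p k)) := by
    intro j
    have h := Real.convexOn_mul_log.map_sum_le (t := Finset.univ)
      (fun k _ => hBnn j k) (hBrow j) (fun k _ => hpnn k)
    simpa [smul_eq_mul, ← hqB j] using h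
  have main : ∑ j, q j * Real.log (q j) ≤ ∑ k, p k * Real.log (p k) := by
    calc ∑ j, q j * Real.log (q j) ≤ ∑ j, ∑ k, B j k * (p k * Real.log (p k)) :=
          Finset.sum_le_sum fun j _ => jensen j
      _ = ∑ k, (∑ j, B j k) * (p k * Real.log (p k)) := by
          rw [Finset.sum_comm]
          exact Finset.sum_congr rfl fun k _ => (Finset.sum_mul _ _ _).symm
      _ = ∑ k, p k * Real.log (p k) := by
          refine Finset.sum_congr rfl fun k _ => ?_
          rw [hBcol k, one_mul]
  simp only [vonNeumannEntropy]
  exact neg_le_neg main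
end

section
/- There is no orthonormal basis of ℂ²⊗ℂ² consisting of product states that is mutually unbiased to the orthonormal basis {|00⟩, (|01⟩+|10⟩+|11⟩)/√3, (|01⟩+ω|10⟩+ω²|11⟩)/√3, (|01⟩+ω²|10⟩+ω|11⟩)/√3}, where ω = e^{2πi/3}. -/
open Matrix
open scoped ComplexOrder

noncomputable def omg : ℂ := Complex.exp (2 * Real.pi * Complex.I / 3)

/-- The two-qubit basis {|00⟩, (|01⟩+|10⟩+|11⟩)/√3, (|01⟩+ω|10⟩+ω²|11⟩)/√3,
(|01⟩+ω²|10⟩+ω|11⟩)/√3}. -/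
noncomputable def entBasis : Fin 4 → (Fin 2 × Fin 2 → ℂ) :=
  ![fun p => if p = (0, 0) then 1 else 0,
    fun p => if p = (0, 0) then 0 else ((Real.sqrt 3 : ℂ))⁻¹,
    fun p => ((Real.sqrt 3 : ℂ))⁻¹ *
      (if p = (0, 1) then 1 else if p = (1, 0) then omg else if p = (1, 1) then omg ^ 2 else 0),
    fun p => ((Real.sqrt 3 : ℂ))⁻¹ *
      (if p = (0, 1) then 1 else if p = (1, 0) then omg ^ 2 else if p = (1, 1) then omg else 0)]

namespace Stmt16Aux
open Complex ComplexConjugate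

lemma omg_pow3 : omg ^ 3 = 1 := by
  rw [omg, ← Complex.exp_nat_mul]
  rw [show ((3:ℕ):ℂ) * (2 * Real.pi * Complex.I / 3) = 2 * Real.pi * Complex.I by push_cast; ring]
  exact Complex.exp_two_pi_mul_I

lemma omg_ne_one : omg ≠ 1 := by
  intro h
  rw [omg, Complex.exp_eq_one_iff] at h
  obtain ⟨n, hn⟩ := h
  have hpi : (Real.pi : ℂ) ≠ 0 := by exact_mod_cast Real.pi_ne_zero
  have hI : (Complex.I : ℂ) ≠ 0 := Complex.I_ne_zero
  have h3 : ((3 * n : ℤ) : ℂ) = 1 := by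
    have h2 : (2 * (Real.pi:ℂ) * Complex.I) * (3 * n - 1) = 0 := by
      linear_combination (-3 : ℂ) * hn
    rcases mul_eq_zero.1 h2 with h | h
    · exact absurd h (by simp [hpi, hI])
    · push_cast
      linear_combination h
  have : (3 * n : ℤ) = 1 := by exact_mod_cast h3
  omega

lemma omg_sum : omg ^ 2 + omg + 1 = 0 := by
  have h2 : (omg - 1) * (omg ^ 2 + omg + 1) = 0 := by linear_combination omg_pow3
  rcases mul_eq_zero.1 h2 with h | h
  · exact absurd (sub_eq_zero.1 h) omg_ne_one
  · exact h

lemma omg_ne_zero : omg ≠ 0 := by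
  intro h
  have := omg_pow3
  rw [h] at this; simp at this

lemma omg_normSq : Complex.normSq omg = 1 := by
  rw [Complex.normSq_eq_norm_sq, omg, Complex.norm_exp]
  have : (2 * (Real.pi:ℂ) * Complex.I / 3).re = 0 := by
    simp [Complex.div_re]
  rw [this, Real.exp_zero]; norm_num

lemma omg_conj : conj omg = omg ^ 2 := by
  have h1 : conj omg * omg = 1 := by
    rw [← Complex.normSq_eq_conj_mul_self, omg_normSq]; norm_num
  linear_combination omg ^ 2 * h1 - (conj omg) * omg_pow3

/-- Two product states with the same (parallel) first factor and the mutual-unbiasedness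
constraints lead to a contradiction. -/
lemma L1 (a0 a1 A0 A1 B0 B1 : ℂ)
    (ha0 : a0 ≠ 0)
    (horth : conj A0 * B0 + conj A1 * B1 = 0)
    (hn1 : (normSq a0 + normSq a1) * (normSq A0 + normSq A1) = 1)
    (hn2 : (normSq a0 + normSq a1) * (normSq B0 + normSq B1) = 1)
    (h1A : normSq (a0 * A0) = 1/4)
    (h1B : normSq (a0 * B0) = 1/4)
    (h3A : conj (a0*A1) * (a1*A0) + conj (a1*A0) * (a1*A1) + conj (a1*A1) * (a0*A1) = 0)
    (h3B : conj (a0*B1) * (a1*B0) + conj (a1*B0) * (a1*B1) + conj (a1*B1) * (a0*B1) = 0) :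
    False := by
  simp only [_root_.map_mul] at h3A h3B
  have hr0 : 0 < normSq a0 := Complex.normSq_pos.2 ha0
  rw [Complex.normSq_mul] at h1A h1B
  have hp0pos : 0 < normSq A0 := by nlinarith [Complex.normSq_nonneg A0]
  have hs0pos : 0 < normSq B0 := by nlinarith [Complex.normSq_nonneg B0]
  have hA0 : A0 ≠ 0 := fun h => by simp [h] at hp0pos
  have hB0 : B0 ≠ 0 := fun h => by simp [h] at hs0pos
  have hp0s0 : normSq A0 = normSq B0 := by
    have := hr0.ne'
    nlinarith
  have horth' : conj A0 * B0 = -(conj A1 * B1) := by linear_combination horth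
  have h5 : normSq A0 * normSq B0 = normSq A1 * normSq B1 := by
    have := congrArg Complex.normSq horth'
    simpa [Complex.normSq_mul, Complex.normSq_conj, Complex.normSq_neg] using this
  have hsums : normSq A0 + normSq A1 = normSq B0 + normSq B1 := by
    have ht : 0 < normSq a0 + normSq a1 := by nlinarith [Complex.normSq_nonneg a1]
    have := ht.ne'
    nlinarith
  have hp1s1 : normSq A1 = normSq B1 := by nlinarith
  have hp0p1 : normSq A0 = normSq A1 := by nlinarith [Complex.normSq_nonneg A1]
  have hr1r0 : normSq a1 = normSq a0 := by nlinarith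
  have hA1 : A1 ≠ 0 := by
    intro h
    rw [h, Complex.normSq_zero] at hp0p1
    exact hp0pos.ne' hp0p1
  have ha1 : a1 ≠ 0 := by
    intro h
    rw [h, Complex.normSq_zero] at hr1r0
    exact hr0.ne hr1r0
  have hp0s1C : conj A0 * A0 = conj B1 * B1 := by
    have h6 : normSq A0 = normSq B1 := by linarith
    have := congrArg (Complex.ofReal) h6
    rwa [Complex.normSq_eq_conj_mul_self, Complex.normSq_eq_conj_mul_self] at this
  have hp1s1C : conj A1 * A1 = conj B1 * B1 := by
    have := congrArg (Complex.ofReal) hp1s1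
    rwa [Complex.normSq_eq_conj_mul_self, Complex.normSq_eq_conj_mul_self] at this
  have hconjorth : A0 * conj B0 + A1 * conj B1 = 0 := by
    have := congrArg conj horth
    simpa [_root_.map_add, _root_.map_mul] using this
  have hQR : (conj A1 * A0) * (B1 * conj B0 + A1 * conj A0) = 0 := by
    linear_combination (conj A1 * B1) * hconjorth + (conj A1 * A1) * hp0s1C
  have hQ : conj A1 * A0 ≠ 0 := mul_ne_zero (by simpa using hA1) hA0
  have hRkey : B1 * conj B0 = -(A1 * conj A0) := by
    rcases mul_eq_zero.1 hQR with h | h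
    · exact absurd h hQ
    · linear_combination h
  have hR : conj B0 * B1 = -(conj A0 * A1) := by linear_combination hRkey
  have hRc : B0 * conj B1 = -(A0 * conj A1) := by
    have := congrArg conj hR
    simpa [_root_.map_add, _root_.map_mul, _root_.map_neg] using this
  have hfin : 2 * (conj a1 * a0) * (conj A1 * A1) = 0 := by
    linear_combination h3A + h3B - (conj a0 * a1) * hRc - (conj a1 * a1) * hR
      + (conj a1 * a0) * hp1s1C
  have hz : conj a1 * a0 = 0 := by
    have hAA : conj A1 * A1 ≠ 0 := mul_ne_zero (by simpa using hA1) hA1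
    rcases mul_eq_zero.1 hfin with h | h
    · rcases mul_eq_zero.1 h with h | h
      · exact absurd h two_ne_zero
      · exact h
    · exact absurd h hAA
  rcases mul_eq_zero.1 hz with h | h
  · exact ha1 (by simpa using h)
  · exact ha0 h

lemma normsq34 (w : ℂ) (h : ‖((Real.sqrt 3 : ℂ))⁻¹ * w‖^2 = 1/4) : conj w * w = 3/4 := by
  have h3 : (0:ℝ) ≤ 3 := by norm_num
  rw [norm_mul, norm_inv, Complex.norm_real, Real.norm_eq_abs,
    _root_.abs_of_nonneg (Real.sqrt_nonneg 3), mul_pow, inv_pow, Real.sq_sqrt h3] at h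
  have hns : Complex.normSq w = 3/4 := by
    rw [← Complex.sq_norm]
    nlinarith [sq_nonneg ‖w‖]
  rw [← Complex.normSq_eq_conj_mul_self, hns]
  norm_num

lemma extract3 (x y z : ℂ)
    (c1 : ‖((Real.sqrt 3:ℂ))⁻¹ * (x + y + z)‖^2 = 1/4)
    (c2 : ‖((Real.sqrt 3:ℂ))⁻¹ * (x + conj omg * y + conj (omg^2) * z)‖^2 = 1/4)
    (c3 : ‖((Real.sqrt 3:ℂ))⁻¹ * (x + conj (omg^2) * y + conj omg * z)‖^2 = 1/4) :
    conj x * y + conj y * z + conj z * x = 0 := by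
  have e1 := normsq34 _ c1
  have e2 := normsq34 _ c2
  have e3 := normsq34 _ c3
  simp only [_root_.map_add, _root_.map_mul, _root_.map_pow, Complex.conj_conj, omg_conj] at e1 e2 e3
  have hp8 : ((omg^2)^2)^2 = omg^2 := by linear_combination (omg^5 + omg^2) * omg_pow3
  have hp4 : (omg^2)^2 = omg := by linear_combination omg * omg_pow3
  rw [hp8, hp4] at e2 e3
  have hww : omg^2 - omg ≠ 0 := by
    intro h
    rcases mul_eq_zero.1 (show omg * (omg - 1) = 0 by linear_combination h) with h' | h'
    · exact omg_ne_zero h'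
    · exact omg_ne_one (sub_eq_zero.1 h')
  have hd : (omg^2 - omg) *
      ((conj x * y + conj y * z + conj z * x) - (conj y * x + conj z * y + conj x * z)) = 0 := by
    linear_combination e2 - e3 + (omg * (conj y * z) - omg * (conj z * y)) * omg_pow3
  have hST : (conj x * y + conj y * z + conj z * x) = (conj y * x + conj z * y + conj x * z) :=
    sub_eq_zero.1 ((mul_eq_zero.1 hd).resolve_left hww)
  have h3S : (3:ℂ) * (conj x * y + conj y * z + conj z * x) = 0 := by
    linear_combination e1 - e2 + (1 - omg) * hST
      + (conj x * y + conj y * z + conj z * x) * omg_sum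
      + (omg * (conj z * y) + conj y * y + conj z * z) * omg_pow3
  rcases mul_eq_zero.1 h3S with h | h
  · norm_num at h
  · exact h

/-- If b and c are both orthogonal to the nonzero vector (p,q) in ℂ², they are parallel. -/
lemma detzero (p q b0 b1 c0 c1 : ℂ) (hp : p ≠ 0)
    (h1 : conj p * b0 + conj q * b1 = 0) (h2 : conj p * c0 + conj q * c1 = 0) :
    b0 * c1 = b1 * c0 := by
  have h : conj p * (b0 * c1 - b1 * c0) = 0 := by linear_combination c1 * h1 - b1 * h2
  rcases mul_eq_zero.1 h with h | h
  · exact absurd h (by simpa using hp)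
  · linear_combination h

/-- Parallel vectors with nonzero first coordinates are not orthogonal. -/
lemma ip_ne (b0 b1 c0 c1 : ℂ) (hb0 : b0 ≠ 0) (hc0 : c0 ≠ 0) (hdet : b0 * c1 = b1 * c0) :
    conj b0 * c0 + conj b1 * c1 ≠ 0 := by
  intro hip
  have h : (conj b0 * b0 + conj b1 * b1) * c0 = 0 := by
    linear_combination b0 * hip - conj b1 * hdet
  have hbb : conj b0 * b0 + conj b1 * b1 ≠ 0 := by
    have : conj b0 * b0 + conj b1 * b1 = ((normSq b0 + normSq b1 : ℝ) : ℂ) := by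
      push_cast [Complex.normSq_eq_conj_mul_self]; ring
    rw [this]
    have : 0 < normSq b0 + normSq b1 := by
      have := Complex.normSq_pos.2 hb0
      nlinarith [Complex.normSq_nonneg b1]
    exact_mod_cast this.ne'
  rcases mul_eq_zero.1 h with h | h
  · exact hbb h
  · exact hc0 h

/-- Two product states with parallel first factors kill everything. -/
lemma samefactor (b0 b1 B0 B1 c0 c1 C0 C1 : ℂ)
    (hb0 : b0 ≠ 0) (hc0 : c0 ≠ 0)
    (hdet : b0 * c1 = b1 * c0)
    (horthpair : (conj b0 * c0 + conj b1 * c1) * (conj B0 * C0 + conj B1 * C1) = 0)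
    (hnj : (normSq b0 + normSq b1) * (normSq B0 + normSq B1) = 1)
    (hnk : (normSq c0 + normSq c1) * (normSq C0 + normSq C1) = 1)
    (h1j : normSq (b0 * B0) = 1/4)
    (h1k : normSq (c0 * C0) = 1/4)
    (h3j : conj (b0*B1) * (b1*B0) + conj (b1*B0) * (b1*B1) + conj (b1*B1) * (b0*B1) = 0)
    (h3k : conj (c0*C1) * (c1*C0) + conj (c1*C0) * (c1*C1) + conj (c1*C1) * (c0*C1) = 0) :
    False := by
  have hAorth : conj B0 * C0 + conj B1 * C1 = 0 :=
    (mul_eq_zero.1 horthpair).resolve_left (ip_ne b0 b1 c0 c1 hb0 hc0 hdet)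
  -- rescale (c,C) to (b, (c0/b0)•C)
  have e0 : b0 * (c0 / b0 * C0) = c0 * C0 := by field_simp
  have e1 : b0 * (c0 / b0 * C1) = c0 * C1 := by field_simp
  have e2 : b1 * (c0 / b0 * C0) = c1 * C0 := by
    field_simp
    linear_combination -C0 * hdet
  have e3 : b1 * (c0 / b0 * C1) = c1 * C1 := by
    field_simp
    linear_combination -C1 * hdet
  have hdetns : normSq b0 * normSq c1 = normSq b1 * normSq c0 := by
    have := congrArg Complex.normSq hdet
    simpa [Complex.normSq_mul] using this
  have hb0ns : normSq b0 ≠ 0 := (Complex.normSq_pos.2 hb0).ne'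
  apply L1 b0 b1 B0 B1 (c0 / b0 * C0) (c0 / b0 * C1) hb0
  · linear_combination (c0 / b0) * hAorth
  · exact hnj
  · rw [Complex.normSq_mul, Complex.normSq_mul, Complex.normSq_div]
    rw [div_mul_eq_mul_div, div_mul_eq_mul_div, ← add_div, ← mul_div_assoc,
      div_eq_iff hb0ns]
    linear_combination normSq b0 * hnk - (normSq C0 + normSq C1) * hdetns
  · exact h1j
  · rw [e0]; exact h1k
  · exact h3j
  · rw [e1, e2, e3]; exact h3k

end Stmt16Aux

open Stmt16Aux Complex ComplexConjugate in
/-- There is no orthonormal basis of ℂ²⊗ℂ² consisting of product states that is mutually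
unbiased to `entBasis`. -/
theorem stmt_16 :
    ¬ ∃ φ : Fin 4 → (Fin 2 × Fin 2 → ℂ),
      (∀ j, ∃ a A : Fin 2 → ℂ, φ j = fun p => a p.1 * A p.2) ∧
      (∀ j j', star (φ j) ⬝ᵥ φ j' = if j = j' then 1 else 0) ∧
      (∀ k j, ‖star (entBasis k) ⬝ᵥ φ j‖ ^ 2 = 1 / 4) := by
  rintro ⟨φ, hprod, hON, hmu⟩
  choose a A hφ using hprod
  have hval : ∀ j p, φ j p = a j p.1 * A j p.2 := fun j p => by rw [hφ j]
  -- dot product expansions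
  have d0 : ∀ j, star (entBasis 0) ⬝ᵥ φ j = a j 0 * A j 0 := by
    intro j
    simp [entBasis, dotProduct, Fintype.sum_prod_type, Fin.sum_univ_two, Prod.ext_iff, hval]
  have d1 : ∀ j, star (entBasis 1) ⬝ᵥ φ j =
      ((Real.sqrt 3:ℂ))⁻¹ * (a j 0 * A j 1 + a j 1 * A j 0 + a j 1 * A j 1) := by
    intro j
    simp [entBasis, dotProduct, Fintype.sum_prod_type, Fin.sum_univ_two, Prod.ext_iff,
      Complex.conj_ofReal, hval]
    ring
  have d2 : ∀ j, star (entBasis 2) ⬝ᵥ φ j =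
      ((Real.sqrt 3:ℂ))⁻¹ * (a j 0 * A j 1 + conj omg * (a j 1 * A j 0)
        + conj (omg^2) * (a j 1 * A j 1)) := by
    intro j
    simp [entBasis, dotProduct, Fintype.sum_prod_type, Fin.sum_univ_two, Prod.ext_iff,
      Complex.conj_ofReal, map_inv₀, hval]
    ring
  have d3 : ∀ j, star (entBasis 3) ⬝ᵥ φ j =
      ((Real.sqrt 3:ℂ))⁻¹ * (a j 0 * A j 1 + conj (omg^2) * (a j 1 * A j 0)
        + conj omg * (a j 1 * A j 1)) := by
    intro j
    simp [entBasis, dotProduct, Fintype.sum_prod_type, Fin.sum_univ_two, Prod.ext_iff,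
      Complex.conj_ofReal, map_inv₀, hval]
    ring
  have dP : ∀ j k, star (φ j) ⬝ᵥ φ k =
      (conj (a j 0) * a k 0 + conj (a j 1) * a k 1) *
      (conj (A j 0) * A k 0 + conj (A j 1) * A k 1) := by
    intro j k
    simp [dotProduct, Fintype.sum_prod_type, Fin.sum_univ_two, hval]
    ring
  -- basic facts per index
  have f1 : ∀ j, normSq (a j 0 * A j 0) = 1/4 := by
    intro j
    have h := hmu 0 j
    rw [d0 j, Complex.sq_norm] at h
    exact h
  have ha0 : ∀ j, a j 0 ≠ 0 := by
    intro j h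
    have := f1 j
    rw [h] at this; simp at this
  have hA0 : ∀ j, A j 0 ≠ 0 := by
    intro j h
    have := f1 j
    rw [h] at this; simp at this
  have fn : ∀ j, (normSq (a j 0) + normSq (a j 1)) * (normSq (A j 0) + normSq (A j 1)) = 1 := by
    intro j
    have h := hON j j
    rw [if_pos rfl, dP j j] at h
    have hC : (((normSq (a j 0) + normSq (a j 1)) * (normSq (A j 0) + normSq (A j 1)) : ℝ) : ℂ)
        = 1 := by
      push_cast [Complex.normSq_eq_conj_mul_self]
      linear_combination h
    exact_mod_cast hC
  have f3 : ∀ j, conj (a j 0 * A j 1) * (a j 1 * A j 0)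
      + conj (a j 1 * A j 0) * (a j 1 * A j 1)
      + conj (a j 1 * A j 1) * (a j 0 * A j 1) = 0 := by
    intro j
    apply extract3
    · have h := hmu 1 j
      rwa [d1 j] at h
    · have h := hmu 2 j
      rwa [d2 j] at h
    · have h := hmu 3 j
      rwa [d3 j] at h
  have horthf : ∀ j k, j ≠ k →
      (conj (a j 0) * a k 0 + conj (a j 1) * a k 1) *
      (conj (A j 0) * A k 0 + conj (A j 1) * A k 1) = 0 := by
    intro j k hjk
    have h := hON j k
    rw [if_neg hjk, dP j k] at h
    exact h
  -- killers
  have killA : ∀ j k, j ≠ k → a j 0 * a k 1 = a j 1 * a k 0 → False := by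
    intro j k hjk hdet
    exact samefactor (a j 0) (a j 1) (A j 0) (A j 1) (a k 0) (a k 1) (A k 0) (A k 1)
      (ha0 j) (ha0 k) hdet (horthf j k hjk) (fn j) (fn k) (f1 j) (f1 k) (f3 j) (f3 k)
  have killB : ∀ j k, j ≠ k → A j 0 * A k 1 = A j 1 * A k 0 → False := by
    intro j k hjk hdet
    -- swap roles of the two tensor factors
    have horthsw : (conj (A j 0) * A k 0 + conj (A j 1) * A k 1) *
        (conj (a j 0) * a k 0 + conj (a j 1) * a k 1) = 0 := by
      linear_combination horthf j k hjk
    have fnsw : ∀ m, (normSq (A m 0) + normSq (A m 1)) * (normSq (a m 0) + normSq (a m 1)) = 1 :=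
      fun m => by linear_combination fn m
    have f1sw : ∀ m, normSq (A m 0 * a m 0) = 1/4 := fun m => by rw [mul_comm]; exact f1 m
    have f3sw : ∀ m, conj (A m 0 * a m 1) * (A m 1 * a m 0)
        + conj (A m 1 * a m 0) * (A m 1 * a m 1)
        + conj (A m 1 * a m 1) * (A m 0 * a m 1) = 0 := by
      intro m
      have h := congrArg conj (f3 m)
      simp only [_root_.map_add, _root_.map_mul, _root_.map_zero, Complex.conj_conj] at h
      simp only [_root_.map_mul]
      linear_combination h
    exact samefactor (A j 0) (A j 1) (a j 0) (a j 1) (A k 0) (A k 1) (a k 0) (a k 1)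
      (hA0 j) (hA0 k) hdet horthsw (fnsw j) (fnsw k) (f1sw j) (f1sw k) (f3sw j) (f3sw k)
  -- each pair is orthogonal in one of the factors
  have hOr : ∀ j k, j ≠ k →
      (conj (a j 0) * a k 0 + conj (a j 1) * a k 1) = 0 ∨
      (conj (A j 0) * A k 0 + conj (A j 1) * A k 1) = 0 := by
    intro j k hjk
    exact mul_eq_zero.1 (horthf j k hjk)
  -- pigeonhole among pairs (0,1), (0,2), (0,3)
  have h01 := hOr 0 1 (by decide)
  have h02 := hOr 0 2 (by decide)
  have h03 := hOr 0 3 (by decide)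
  rcases h01 with h1 | h1 <;> rcases h02 with h2 | h2 <;> rcases h03 with h3 | h3
  · exact killA 1 2 (by decide) (detzero (a 0 0) (a 0 1) _ _ _ _ (ha0 0) h1 h2)
  · exact killA 1 2 (by decide) (detzero (a 0 0) (a 0 1) _ _ _ _ (ha0 0) h1 h2)
  · exact killA 1 3 (by decide) (detzero (a 0 0) (a 0 1) _ _ _ _ (ha0 0) h1 h3)
  · exact killB 2 3 (by decide) (detzero (A 0 0) (A 0 1) _ _ _ _ (hA0 0) h2 h3)
  · exact killA 2 3 (by decide) (detzero (a 0 0) (a 0 1) _ _ _ _ (ha0 0) h2 h3)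
  · exact killB 1 3 (by decide) (detzero (A 0 0) (A 0 1) _ _ _ _ (hA0 0) h1 h3)
  · exact killB 1 2 (by decide) (detzero (A 0 0) (A 0 1) _ _ _ _ (hA0 0) h1 h2)
  · exact killB 1 2 (by decide) (detzero (A 0 0) (A 0 1) _ _ _ _ (hA0 0) h1 h2)
end

section
/- Let ρ be a positive definite d×d density matrix and {m_i}_{i=1}^d an orthonormal basis with ⟨m_i, √ρ m_i⟩ = (tr √ρ)/d for all i. Then Σ_i |⟨m_i, √ρ m_i⟩|² = (tr √ρ)²/d, and for any other orthonormal basis {e_i}, Σ_i |⟨m_i, √ρ e_i⟩|² ≤ (tr √ρ)²/d. -/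
open Matrix
open scoped ComplexOrder

/-- The positive semidefinite square root of a positive semidefinite matrix
(the definition `Matrix.PosSemidef.sqrt` of the older Mathlib, since removed). -/
noncomputable def Matrix.PosSemidef.sqrt {n 𝕜 : Type*} [Fintype n] [DecidableEq n] [RCLike 𝕜]
    {A : Matrix n n 𝕜} (hA : A.PosSemidef) : Matrix n n 𝕜 :=
  hA.1.eigenvectorUnitary.1 * diagonal ((↑) ∘ (√·) ∘ hA.1.eigenvalues) *
    (star hA.1.eigenvectorUnitary : Matrix n n 𝕜)

private lemma aux_posSemidef_sqrt {d : ℕ} {A : Matrix (Fin d) (Fin d) ℂ} (hA : A.PosSemidef) :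
    hA.sqrt.PosSemidef := by
  unfold Matrix.PosSemidef.sqrt
  have h := (posSemidef_diagonal_iff (d := (RCLike.ofReal ∘ (√·) ∘ hA.1.eigenvalues : Fin d → ℂ))).mpr
    (fun i => RCLike.ofReal_nonneg.mpr (Real.sqrt_nonneg _))
  simpa [star_eq_conjTranspose] using
    h.mul_mul_conjTranspose_same (hA.1.eigenvectorUnitary : Matrix (Fin d) (Fin d) ℂ)

private lemma aux_sqrt_mul_self {d : ℕ} {A : Matrix (Fin d) (Fin d) ℂ} (hA : A.PosSemidef) :
    hA.sqrt * hA.sqrt = A := by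
  unfold Matrix.PosSemidef.sqrt
  have hU : (star hA.1.eigenvectorUnitary : Matrix (Fin d) (Fin d) ℂ) *
      hA.1.eigenvectorUnitary.1 = 1 := Unitary.coe_star_mul_self _
  conv_rhs => rw [hA.1.spectral_theorem, Unitary.conjStarAlgAut_apply]
  calc _ = hA.1.eigenvectorUnitary.1 * diagonal (RCLike.ofReal ∘ (√·) ∘ hA.1.eigenvalues) *
        ((star hA.1.eigenvectorUnitary : Matrix (Fin d) (Fin d) ℂ) * hA.1.eigenvectorUnitary.1) *
        diagonal (RCLike.ofReal ∘ (√·) ∘ hA.1.eigenvalues) *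
        (star hA.1.eigenvectorUnitary : Matrix (Fin d) (Fin d) ℂ) := by
          simp only [Matrix.mul_assoc]
    _ = _ := by
      rw [hU, Matrix.mul_one, Matrix.mul_assoc _ (diagonal _) (diagonal _), diagonal_mul_diagonal]
      congr 2
      congr 1
      funext i
      simp only [Function.comp_apply, ← RCLike.ofReal_mul, Real.mul_self_sqrt (hA.eigenvalues_nonneg i)]

private lemma aux_trace_nonneg {d : ℕ} {A : Matrix (Fin d) (Fin d) ℂ} (hA : A.PosSemidef) :
    0 ≤ A.trace := by
  rw [trace]
  refine Finset.sum_nonneg fun i _ => ?_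
  have := hA.dotProduct_mulVec_nonneg (Pi.single i 1)
  simpa [mulVec_single, dotProduct, Pi.single_apply, Finset.sum_ite_eq'] using this

private lemma aux_sum_quad_eq_trace {d : ℕ} (A : Matrix (Fin d) (Fin d) ℂ)
    (e : Fin d → Fin d → ℂ) (he : ∀ i j, star (e i) ⬝ᵥ e j = if i = j then 1 else 0) :
    ∑ i, star (e i) ⬝ᵥ A *ᵥ e i = A.trace := by
  set U : Matrix (Fin d) (Fin d) ℂ := Matrix.of fun j i => e i j with hU
  have hUU : Uᴴ * U = 1 := by
    ext i j
    simpa [Matrix.mul_apply, conjTranspose_apply, hU, dotProduct, one_apply] using he i j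
  have hUU' : U * Uᴴ = 1 := mul_eq_one_comm.mp hUU
  have key : ∀ i, star (e i) ⬝ᵥ A *ᵥ e i = (Uᴴ * A * U) i i := by
    intro i
    simp [Matrix.mul_apply, conjTranspose_apply, hU, dotProduct, mulVec,
      Finset.mul_sum, Finset.sum_mul, mul_assoc]
    rw [Finset.sum_comm]
  calc ∑ i, star (e i) ⬝ᵥ A *ᵥ e i = (Uᴴ * A * U).trace := by
        rw [trace]; exact Finset.sum_congr rfl fun i _ => key i
    _ = A.trace := by
        rw [Matrix.mul_assoc, trace_mul_comm, Matrix.mul_assoc, hUU', Matrix.mul_one]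

private lemma aux_cs {d : ℕ} (u v : Fin d → ℂ) :
    ‖star u ⬝ᵥ v‖ ^ 2 ≤ (star u ⬝ᵥ u).re * (star v ⬝ᵥ v).re := by
  set u' : EuclideanSpace ℂ (Fin d) := (WithLp.equiv 2 _).symm u with hu
  set v' : EuclideanSpace ℂ (Fin d) := (WithLp.equiv 2 _).symm v with hv
  have h1 : star u ⬝ᵥ v = (inner ℂ u' v' : ℂ) := by rw [dotProduct_comm]; rfl
  have h2 : (star u ⬝ᵥ u).re = ‖u'‖ ^ 2 := by
    have h : (star u ⬝ᵥ u : ℂ) = (inner ℂ u' u' : ℂ) := by rw [dotProduct_comm]; rfl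
    rw [h]; exact inner_self_eq_norm_sq (𝕜 := ℂ) u'
  have h3 : (star v ⬝ᵥ v).re = ‖v'‖ ^ 2 := by
    have h : (star v ⬝ᵥ v : ℂ) = (inner ℂ v' v' : ℂ) := by rw [dotProduct_comm]; rfl
    rw [h]; exact inner_self_eq_norm_sq (𝕜 := ℂ) v'
  rw [h1, h2, h3]
  have h4 := norm_inner_le_norm (𝕜 := ℂ) u' v'
  have h0 : (0:ℝ) ≤ ‖(inner ℂ u' v' : ℂ)‖ := norm_nonneg _
  nlinarith

private lemma aux_factor {d : ℕ} {A : Matrix (Fin d) (Fin d) ℂ} (hA : A.PosSemidef)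
    (x y : Fin d → ℂ) :
    star x ⬝ᵥ A *ᵥ y = star (hA.sqrt *ᵥ x) ⬝ᵥ (hA.sqrt *ᵥ y) := by
  set B := hA.sqrt with hB
  have hBH : Bᴴ = B := (aux_posSemidef_sqrt hA).1
  have hBB : B * B = A := aux_sqrt_mul_self hA
  rw [star_mulVec, hBH, ← dotProduct_mulVec, ← hBB, mulVec_mulVec]

theorem stmt_19 (d : ℕ) (hd : 0 < d) (ρ : Matrix (Fin d) (Fin d) ℂ) (hρ : ρ.PosDef)
    (htr : ρ.trace = 1)
    (m : Fin d → Fin d → ℂ) (hm : ∀ i j, star (m i) ⬝ᵥ m j = if i = j then 1 else 0)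
    (hub : ∀ i, star (m i) ⬝ᵥ hρ.posSemidef.sqrt *ᵥ m i = hρ.posSemidef.sqrt.trace / d) :
    (∑ i, ‖star (m i) ⬝ᵥ hρ.posSemidef.sqrt *ᵥ m i‖ ^ 2 =
        hρ.posSemidef.sqrt.trace.re ^ 2 / d) ∧
    ∀ e : Fin d → Fin d → ℂ, (∀ i j, star (e i) ⬝ᵥ e j = if i = j then 1 else 0) →
      ∑ i, ‖star (m i) ⬝ᵥ hρ.posSemidef.sqrt *ᵥ e i‖ ^ 2 ≤
        hρ.posSemidef.sqrt.trace.re ^ 2 / d := by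
  set A := hρ.posSemidef.sqrt with hAdef
  have hA : A.PosSemidef := aux_posSemidef_sqrt hρ.posSemidef
  set t := A.trace with ht
  have htnn : 0 ≤ t := aux_trace_nonneg hA
  have htim : t.im = 0 := by
    have := (Complex.le_def.mp htnn).2
    simpa using this.symm
  have htre : 0 ≤ t.re := by
    have := (Complex.le_def.mp htnn).1
    simpa using this
  have hdpos : (0:ℝ) < d := by exact_mod_cast hd
  have hterm : ∀ i, ‖star (m i) ⬝ᵥ A *ᵥ m i‖ ^ 2 = (t.re / d) ^ 2 := by
    intro i
    rw [hub i]
    rw [norm_div]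
    have : ‖t‖ = t.re := by
      rw [Complex.norm_def, Complex.normSq_apply, htim]
      simp [Real.sqrt_mul_self htre]
    rw [this]
    simp [Complex.norm_natCast]
  have htre_quad : ∀ i, (star (m i) ⬝ᵥ A *ᵥ m i).re = t.re / d := by
    intro i
    rw [hub i, Complex.div_re]
    simp only [Complex.natCast_re, Complex.natCast_im, Complex.normSq_natCast, htim]
    rw [mul_zero, zero_div, add_zero]
    rcases Nat.eq_zero_or_pos d with h | h
    · omega
    have : ((d:ℝ)) ≠ 0 := by positivity
    field_simp
  constructor
  · rw [Finset.sum_congr rfl fun i _ => hterm i]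
    rw [Finset.sum_const, Finset.card_univ, Fintype.card_fin, nsmul_eq_mul]
    field_simp
  · intro e he
    have hsum := aux_sum_quad_eq_trace A e he
    have hsum_re : ∑ i, (star (e i) ⬝ᵥ A *ᵥ e i).re = t.re := by
      rw [← Complex.re_sum, hsum]
    have hbound : ∀ i, ‖star (m i) ⬝ᵥ A *ᵥ e i‖ ^ 2 ≤
        (t.re / d) * (star (e i) ⬝ᵥ A *ᵥ e i).re := by
      intro i
      rw [aux_factor hA (m i) (e i)]
      calc ‖star (hA.sqrt *ᵥ m i) ⬝ᵥ (hA.sqrt *ᵥ e i)‖ ^ 2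
          ≤ (star (hA.sqrt *ᵥ m i) ⬝ᵥ (hA.sqrt *ᵥ m i)).re *
            (star (hA.sqrt *ᵥ e i) ⬝ᵥ (hA.sqrt *ᵥ e i)).re := aux_cs _ _
        _ = (t.re / d) * (star (e i) ⬝ᵥ A *ᵥ e i).re := by
            rw [← aux_factor hA (m i) (m i), ← aux_factor hA (e i) (e i), htre_quad i]
    calc ∑ i, ‖star (m i) ⬝ᵥ A *ᵥ e i‖ ^ 2
        ≤ ∑ i, (t.re / d) * (star (e i) ⬝ᵥ A *ᵥ e i).re :=
          Finset.sum_le_sum fun i _ => hbound i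
      _ = (t.re / d) * t.re := by rw [← Finset.mul_sum, hsum_re]
      _ = t.re ^ 2 / d := by ring
end
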